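/- Let M, g, m ≥ 1 be integers. Suppose for each ℓ ∈ [g] we have sequences x_ℓ^1,...,x_ℓ^{m+1} and y_ℓ^1,...,y_ℓ^{m+1} of natural numbers satisfying: (1) y_ℓ^{j+1} + x_ℓ^j = M for all ℓ ∈ [g], j ∈ [m]; (2) y_ℓ^j + x_ℓ^j ≤ M for all ℓ ∈ [g], j ∈ [m+1]; (3) Σ_{ℓ=1}^g x_ℓ^{m+1} = gM/2 = Σ_{ℓ=1}^g y_ℓ^1. Then for every ℓ ∈ [g], the sequence x_ℓ^1, ..., x_ℓ^{m+1} is constant, and similarly each sequence y_ℓ^1, ..., y_ℓ^{m+1} is constant. -/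

import Mathlib

theorem stmt_1 (M g m : ℕ) (hM : 1 ≤ M) (hg : 1 ≤ g) (hm : 1 ≤ m)
    (hEven : Even (g * M)) (x y : ℕ → ℕ → ℕ)
    (h1 : ∀ ℓ ∈ Finset.Icc 1 g, ∀ j ∈ Finset.Icc 1 m, y ℓ (j + 1) + x ℓ j = M)
    (h2 : ∀ ℓ ∈ Finset.Icc 1 g, ∀ j ∈ Finset.Icc 1 (m + 1), y ℓ j + x ℓ j ≤ M)
    (h3x : ∑ ℓ ∈ Finset.Icc 1 g, x ℓ (m + 1) = g * M / 2)
    (h3y : ∑ ℓ ∈ Finset.Icc 1 g, y ℓ 1 = g * M / 2) :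
    ∀ ℓ ∈ Finset.Icc 1 g, ∀ j ∈ Finset.Icc 1 (m + 1), ∀ j' ∈ Finset.Icc 1 (m + 1),
      x ℓ j = x ℓ j' ∧ y ℓ j = y ℓ j' := by
  obtain ⟨k, hk⟩ := hEven
  have hhalf : g * M / 2 = k := by omega
  -- one-step decrease of x
  have hxstep : ∀ ℓ ∈ Finset.Icc 1 g, ∀ j, 1 ≤ j → j ≤ m → x ℓ (j + 1) ≤ x ℓ j := by
    intro ℓ hℓ j hj1 hjm
    have h1' := h1 ℓ hℓ j (Finset.mem_Icc.mpr ⟨hj1, hjm⟩)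
    have h2' := h2 ℓ hℓ (j + 1) (Finset.mem_Icc.mpr ⟨by omega, by omega⟩)
    omega
  -- x is antitone on [1, m+1]
  have hxanti : ∀ ℓ ∈ Finset.Icc 1 g, ∀ d j, 1 ≤ j → j + d ≤ m + 1 → x ℓ (j + d) ≤ x ℓ j := by
    intro ℓ hℓ d
    induction d with
    | zero => intro j _ _; simp
    | succ n ih =>
      intro j hj1 hjd
      have h1 := ih j hj1 (by omega)
      have h2 := hxstep ℓ hℓ (j + n) (by omega) (by omega)
      calc x ℓ (j + (n + 1)) = x ℓ ((j + n) + 1) := by ring_nf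
        _ ≤ x ℓ (j + n) := h2
        _ ≤ x ℓ j := h1
  have hxsand : ∀ ℓ ∈ Finset.Icc 1 g, ∀ j, 1 ≤ j → j ≤ m + 1 →
      x ℓ (m + 1) ≤ x ℓ j ∧ x ℓ j ≤ x ℓ 1 := by
    intro ℓ hℓ j hj1 hjm
    constructor
    · have := hxanti ℓ hℓ (m + 1 - j) j hj1 (by omega)
      have e : j + (m + 1 - j) = m + 1 := by omega
      rwa [e] at this
    · have := hxanti ℓ hℓ (j - 1) 1 le_rfl (by omega)
      have e : 1 + (j - 1) = j := by omega
      rwa [e] at this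
  -- sums
  have hle1 : ∀ ℓ ∈ Finset.Icc 1 g, x ℓ (m + 1) ≤ x ℓ 1 :=
    fun ℓ hℓ => (hxsand ℓ hℓ 1 le_rfl (by omega)).1
  have hsum1 : ∑ ℓ ∈ Finset.Icc 1 g, x ℓ (m + 1) ≤ ∑ ℓ ∈ Finset.Icc 1 g, x ℓ 1 :=
    Finset.sum_le_sum hle1
  have hle2 : ∀ ℓ ∈ Finset.Icc 1 g, y ℓ 1 + x ℓ 1 ≤ M :=
    fun ℓ hℓ => h2 ℓ hℓ 1 (Finset.mem_Icc.mpr ⟨le_rfl, by omega⟩)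
  have hsum2 : ∑ ℓ ∈ Finset.Icc 1 g, (y ℓ 1 + x ℓ 1) ≤ ∑ ℓ ∈ Finset.Icc 1 g, M :=
    Finset.sum_le_sum hle2
  have hcard : ∑ ℓ ∈ Finset.Icc 1 g, M = g * M := by
    rw [Finset.sum_const, Nat.Icc_eq_range', smul_eq_mul]
    simp
  have hsplit : ∑ ℓ ∈ Finset.Icc 1 g, (y ℓ 1 + x ℓ 1)
      = (∑ ℓ ∈ Finset.Icc 1 g, y ℓ 1) + ∑ ℓ ∈ Finset.Icc 1 g, x ℓ 1 :=
    Finset.sum_add_distrib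
  have hx1sum : ∑ ℓ ∈ Finset.Icc 1 g, x ℓ 1 = k := by omega
  have hsumM : ∑ ℓ ∈ Finset.Icc 1 g, (y ℓ 1 + x ℓ 1) = ∑ ℓ ∈ Finset.Icc 1 g, M := by omega
  have hterm1 : ∀ ℓ ∈ Finset.Icc 1 g, y ℓ 1 + x ℓ 1 = M := by
    intro ℓ hℓ
    exact (Finset.sum_eq_sum_iff_of_le hle2).mp hsumM ℓ hℓ
  have hxsumeq : ∑ ℓ ∈ Finset.Icc 1 g, x ℓ (m + 1) = ∑ ℓ ∈ Finset.Icc 1 g, x ℓ 1 := by omega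
  have hterm2 : ∀ ℓ ∈ Finset.Icc 1 g, x ℓ (m + 1) = x ℓ 1 := by
    intro ℓ hℓ
    exact (Finset.sum_eq_sum_iff_of_le hle1).mp hxsumeq ℓ hℓ
  -- conclude
  intro ℓ hℓ j hj j' hj'
  simp only [Finset.mem_Icc] at hj hj'
  have hxconst : ∀ i, 1 ≤ i → i ≤ m + 1 → x ℓ i = x ℓ 1 := by
    intro i hi1 him
    have := hxsand ℓ hℓ i hi1 him
    have := hterm2 ℓ hℓ
    omega
  have hyconst : ∀ i, 1 ≤ i → i ≤ m + 1 → y ℓ i = M - x ℓ 1 := by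
    intro i hi1 him
    rcases Nat.eq_or_lt_of_le hi1 with h | h
    · obtain rfl : i = 1 := h.symm
      have := hterm1 ℓ hℓ
      omega
    · obtain ⟨i0, rfl⟩ : ∃ i0, i = i0 + 1 := ⟨i - 1, by omega⟩
      have h1' := h1 ℓ hℓ i0 (Finset.mem_Icc.mpr ⟨by omega, by omega⟩)
      have := hxconst i0 (by omega) (by omega)
      omega
  refine ⟨?_, ?_⟩
  · rw [hxconst j hj.1 hj.2, hxconst j' hj'.1 hj'.2]
  · rw [hyconst j hj.1 hj.2, hyconst j' hj'.1 hj'.2]
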